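/- Let Φ be a semi-coherent structure function on n ≥ 1 components with structural signature s, and let T_1,…,T_n be i.i.d. exponential random variables with rate μ > 0. Let T_fail := inf{ t ≥ 0 : Φ(1{T_1 > t},…,1{T_n > t}) = 0 } be the system failure time and T_{1:n} ≤ … ≤ T_{n:n} the order statistics of T_1,…,T_n. Then for all real t, t_1, …, t_n: P( T_fail > t, T_{1:n} > t_1, …, T_{n:n} > t_n ) = Σ_{k=1}^{n} s_k · P( T_{k:n} > t, T_{1:n} > t_1, …, T_{n:n} > t_n ). In particular P(T_fail > t) = Σ_{k=1}^{n} s_k P(T_{k:n} > t) for all t (the Samaniego decomposition). -/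

import Mathlib

open MeasureTheory ProbabilityTheory

/-- `S̄ k`: the proportion of states with exactly `k` failed components in which
the system works. -/
noncomputable def Sbar (n : ℕ) (Φ : (Fin n → Bool) → Bool) (k : ℕ) : ℝ :=
  ((Finset.univ.filter (fun x : Fin n → Bool =>
      (Finset.univ.filter (fun i => x i = false)).card = k ∧ Φ x = true)).card : ℝ) /
    (n.choose k : ℝ)

/-- The structural signature `s k = S̄_{k-1} - S̄_k`. -/
noncomputable def structSig (n : ℕ) (Φ : (Fin n → Bool) → Bool) (k : ℕ) : ℝ :=
  Sbar n Φ (k - 1) - Sbar n Φ k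

/-- The `k`-th order statistic (`k : Fin n`, 0-based) of a tuple `x : Fin n → ℝ`. -/
noncomputable def orderStat (n : ℕ) (x : Fin n → ℝ) (k : Fin n) : ℝ :=
  x (Tuple.sort x k)

/-- The system failure time: the first nonnegative time at which the structure
function evaluated at the vector of component states (component `i` works at time `t`
iff `t < x i`) is `0`. -/
noncomputable def failTime (n : ℕ) (Φ : (Fin n → Bool) → Bool) (x : Fin n → ℝ) : ℝ :=
  sInf {t : ℝ | 0 ≤ t ∧ Φ (fun i => decide (t < x i)) = false}

/-- the set of dead components at time `t` -/
noncomputable def deadSet (n : ℕ) (t : ℝ) (y : Fin n → ℝ) : Finset (Fin n) :=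
  Finset.univ.filter (fun i => y i ≤ t)

def deadE (n : ℕ) (t : ℝ) (D : Finset (Fin n)) : Set (Fin n → ℝ) :=
  {y | ∀ i, y i ≤ t ↔ i ∈ D}

lemma mem_deadE_iff {n : ℕ} {t : ℝ} {D : Finset (Fin n)} {y : Fin n → ℝ} :
    y ∈ deadE n t D ↔ deadSet n t y = D := by
  simp only [deadE, Set.mem_setOf_eq, deadSet]
  constructor
  · intro h; ext i; simpa using h i
  · intro h i
    rw [← h]; simp

lemma ord_iff {n : ℕ} (y : Fin n → ℝ) (t : ℝ) (k : Fin n) :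
    t < orderStat n y k ↔ (deadSet n t y).card ≤ (k : ℕ) := by
  set σ := Tuple.sort y with hσ
  have hm : Monotone (y ∘ σ) := Tuple.monotone_sort y
  constructor
  · intro h
    have hsub : deadSet n t y ⊆ (Finset.Iio k).image σ := by
      intro i hi
      simp only [deadSet, Finset.mem_filter, Finset.mem_univ, true_and] at hi
      have h2 : σ.symm i < k := by
        by_contra hcon
        push_neg at hcon
        have h3 := hm hcon
        simp only [Function.comp_apply, Equiv.apply_symm_apply] at h3
        exact absurd h (not_lt.mpr (le_trans h3 hi))
      exact Finset.mem_image.mpr ⟨σ.symm i, Finset.mem_Iio.mpr h2, by simp⟩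
    calc (deadSet n t y).card ≤ ((Finset.Iio k).image σ).card := Finset.card_le_card hsub
      _ ≤ (Finset.Iio k).card := Finset.card_image_le
      _ = (k : ℕ) := Fin.card_Iio k
  · intro h
    by_contra hcon
    push_neg at hcon
    have hsub : (Finset.Iic k).image σ ⊆ deadSet n t y := by
      intro i hi
      obtain ⟨j, hj, rfl⟩ := Finset.mem_image.mp hi
      have : (y ∘ σ) j ≤ (y ∘ σ) k := hm (Finset.mem_Iic.mp hj)
      simp only [deadSet, Finset.mem_filter, Finset.mem_univ, true_and]
      exact le_trans this hcon
    have h2 : (k : ℕ) + 1 ≤ (k : ℕ) := by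
      calc (k : ℕ) + 1 = (Finset.Iic k).card := (Fin.card_Iic k).symm
        _ = ((Finset.Iic k).image σ).card := (Finset.card_image_of_injective _ σ.injective).symm
        _ ≤ (deadSet n t y).card := Finset.card_le_card hsub
        _ ≤ (k : ℕ) := h
    omega

lemma failTime_nonneg (n : ℕ) (Φ : (Fin n → Bool) → Bool) (y : Fin n → ℝ) :
    0 ≤ failTime n Φ y :=
  Real.sInf_nonneg (fun _ hs => hs.1)

lemma lt_failTime_iff {n : ℕ} (hn : 1 ≤ n) {Φ : (Fin n → Bool) → Bool}
    (hmono : ∀ x y : Fin n → Bool, (∀ i, x i ≤ y i) → Φ x ≤ Φ y)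
    (hΦ0 : Φ (fun _ => false) = false) {t : ℝ} (ht : 0 ≤ t) (y : Fin n → ℝ) :
    t < failTime n Φ y ↔ Φ (fun i => decide (t < y i)) = true := by
  have hne : Nonempty (Fin n) := ⟨⟨0, hn⟩⟩
  set S : Set ℝ := {s | 0 ≤ s ∧ Φ (fun i => decide (s < y i)) = false} with hSdef
  have hbdd : BddBelow S := ⟨0, fun s hs => hs.1⟩
  have hSne : S.Nonempty := by
    refine ⟨max 0 (Finset.univ.sup' (Finset.univ_nonempty) y), le_max_left _ _, ?_⟩
    have : (fun i => decide (max 0 (Finset.univ.sup' Finset.univ_nonempty y) < y i))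
        = (fun _ : Fin n => false) := by
      funext i
      exact decide_eq_false (not_lt.mpr (le_max_of_le_right (Finset.le_sup' y (Finset.mem_univ i))))
    rw [this, hΦ0]
  constructor
  · intro h
    by_contra hΦt
    have ht' : t ∈ S := ⟨ht, by simpa using hΦt⟩
    exact absurd h (not_lt.mpr (csInf_le hbdd ht'))
  · intro hΦt
    have halive : (Finset.univ.filter (fun i => t < y i)).Nonempty := by
      by_contra he
      rw [Finset.not_nonempty_iff_eq_empty, Finset.filter_eq_empty_iff] at he
      have h0 : (fun i => decide (t < y i)) = (fun _ : Fin n => false) :=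
        funext fun i => decide_eq_false (he (Finset.mem_univ i))
      rw [h0, hΦ0] at hΦt
      exact Bool.false_ne_true hΦt
    set m := (Finset.univ.filter (fun i => t < y i)).inf' halive y with hm
    have htm : t < m := by
      rw [hm, Finset.lt_inf'_iff]
      intro i hi
      exact (Finset.mem_filter.mp hi).2
    refine lt_of_lt_of_le htm (le_csInf hSne ?_)
    intro s hs
    by_contra hcon
    push_neg at hcon
    have hstate : ∀ i, (decide (t < y i) : Bool) ≤ decide (s < y i) := by
      intro i
      by_cases hi : t < y i
      · have hyi : s < y i := lt_of_lt_of_le hcon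
          (Finset.inf'_le y (Finset.mem_filter.mpr ⟨Finset.mem_univ i, hi⟩))
        simp [hi, hyi]
      · simp [hi]
    have hle := hmono _ _ hstate
    rw [hΦt] at hle
    have : Φ (fun i => decide (s < y i)) = true := le_antisymm (Bool.le_true _) hle
    rw [hs.2] at this
    exact Bool.false_ne_true this

lemma measurableSet_deadE {n : ℕ} (t : ℝ) (D : Finset (Fin n)) :
    MeasurableSet (deadE n t D) := by
  have h : deadE n t D
      = ⋂ i, (fun y : Fin n → ℝ => y i) ⁻¹' (if i ∈ D then Set.Iic t else (Set.Iic t)ᶜ) := by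
    ext y
    simp only [deadE, Set.mem_setOf_eq, Set.mem_iInter, Set.mem_preimage]
    refine forall_congr' fun i => ?_
    by_cases hi : i ∈ D <;> simp [hi, Set.mem_Iic, not_le]
  rw [h]
  refine MeasurableSet.iInter fun i => (measurable_pi_apply i) ?_
  split
  · exact measurableSet_Iic
  · exact measurableSet_Iic.compl

lemma biUnion_deadE {n : ℕ} (t : ℝ) (S : Finset (Finset (Fin n))) :
    (⋃ D ∈ S, deadE n t D) = {y | deadSet n t y ∈ S} := by
  ext y
  simp only [Set.mem_iUnion, Set.mem_setOf_eq, mem_deadE_iff, exists_prop]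
  constructor
  · rintro ⟨D, hD, rfl⟩; exact hD
  · intro h; exact ⟨_, h, rfl⟩

section Prob
variable {Ω : Type*} [MeasurableSpace Ω] (Pr : Measure Ω) [IsProbabilityMeasure Pr]
    {n : ℕ} (hn : 1 ≤ n) (μ : ℝ) (T : Fin n → Ω → ℝ)
    (hmeas : ∀ i, Measurable (T i))
    (hindep : iIndepFun T Pr)
    (hexp : ∀ (i : Fin n) (t : ℝ), 0 ≤ t →
      Pr {ω | t < T i ω} = ENNReal.ofReal (Real.exp (-μ * t)))

include hexp in
lemma hsurv : ∀ (i : Fin n) (t : ℝ),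
    Pr (T i ⁻¹' Set.Ioi t) = ENNReal.ofReal (Real.exp (-μ * max t 0)) := by
  intro i t
  rcases le_or_gt 0 t with h | h
  · rw [max_eq_left h]
    exact hexp i t h
  · rw [max_eq_right h.le]
    have h1 : Pr (T i ⁻¹' Set.Ioi (0:ℝ)) = 1 := by
      have := hexp i 0 le_rfl
      simp at this
      exact this
    have hle : Pr (T i ⁻¹' Set.Ioi (0:ℝ)) ≤ Pr (T i ⁻¹' Set.Ioi t) :=
      measure_mono (Set.preimage_mono (Set.Ioi_subset_Ioi h.le))
    rw [h1] at hle
    have : Pr (T i ⁻¹' Set.Ioi t) = 1 := le_antisymm prob_le_one hle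
    simp [this]

include hmeas hexp in
lemma hmarg : ∀ i j : Fin n, Pr.map (T i) = Pr.map (T j) := by
  intro i j
  haveI : IsProbabilityMeasure (Pr.map (T i)) := Measure.isProbabilityMeasure_map (hmeas i).aemeasurable
  haveI : IsProbabilityMeasure (Pr.map (T j)) := Measure.isProbabilityMeasure_map (hmeas j).aemeasurable
  refine ext_of_generate_finite (Set.range Set.Ioi)
    ((BorelSpace.measurable_eq (α := ℝ)).trans (borel_eq_generateFrom_Ioi ℝ)) isPiSystem_Ioi ?_ (by simp)
  rintro s ⟨a, rfl⟩
  rw [Measure.map_apply (hmeas i) measurableSet_Ioi, Measure.map_apply (hmeas j) measurableSet_Ioi,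
    hsurv Pr μ T hexp i a, hsurv Pr μ T hexp j a]

include hn hmeas hindep hexp in
lemma hlaw : ∀ σ : Equiv.Perm (Fin n),
    Pr.map (fun ω i => T (σ i) ω) = Measure.pi (fun _ => Pr.map (T ⟨0, hn⟩)) := by
  intro σ
  haveI : IsProbabilityMeasure (Pr.map (T ⟨0, hn⟩)) :=
    Measure.isProbabilityMeasure_map (hmeas _).aemeasurable
  refine (Measure.pi_eq ?_).symm
  intro s hs
  have hvec : Measurable (fun ω (i : Fin n) => T (σ i) ω) :=
    measurable_pi_lambda _ (fun i => hmeas (σ i))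
  rw [Measure.map_apply hvec (MeasurableSet.univ_pi hs)]
  have hpre : (fun ω (i : Fin n) => T (σ i) ω) ⁻¹' Set.univ.pi s
      = ⋂ j, T j ⁻¹' s (σ.symm j) := by
    ext ω
    simp only [Set.mem_preimage, Set.mem_pi, Set.mem_univ, true_imp_iff, Set.mem_iInter]
    constructor
    · intro h j; simpa using h (σ.symm j)
    · intro h i
      have := h (σ i)
      rwa [Equiv.symm_apply_apply] at this
  rw [hpre, hindep.meas_iInter (fun j => ⟨s (σ.symm j), hs _, rfl⟩)]
  have hterm : ∀ j : Fin n, Pr (T j ⁻¹' s (σ.symm j)) = Pr.map (T ⟨0, hn⟩) (s (σ.symm j)) := by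
    intro j
    rw [← hmarg Pr μ T hmeas hexp j ⟨0, hn⟩, Measure.map_apply (hmeas j) (hs _)]
  simp_rw [hterm]
  exact Equiv.prod_comp σ.symm (fun j => Pr.map (T ⟨0, hn⟩) (s j))

include hn hmeas hindep hexp in
lemma hinv : ∀ (σ : Equiv.Perm (Fin n)) (B : Set (Fin n → ℝ)), MeasurableSet B →
    Pr ((fun ω (i : Fin n) => T i ω) ⁻¹' ((fun (y : Fin n → ℝ) i => y (σ i)) ⁻¹' B))
      = Pr ((fun ω (i : Fin n) => T i ω) ⁻¹' B) := by
  intro σ B hB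
  have h1 : Measurable (fun ω (i : Fin n) => T (σ i) ω) :=
    measurable_pi_lambda _ (fun i => hmeas (σ i))
  have h2 : Measurable (fun ω (i : Fin n) => T i ω) :=
    measurable_pi_lambda _ (fun i => hmeas i)
  have hcomp : (fun ω (i : Fin n) => T i ω) ⁻¹' ((fun (y : Fin n → ℝ) i => y (σ i)) ⁻¹' B)
      = (fun ω (i : Fin n) => T (σ i) ω) ⁻¹' B := rfl
  rw [hcomp, ← Measure.map_apply h1 hB, ← Measure.map_apply h2 hB,
    hlaw Pr hn μ T hmeas hindep hexp σ]
  have : (fun ω (i : Fin n) => T i ω) = (fun ω (i : Fin n) => T ((Equiv.refl (Fin n)) i) ω) := rfl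
  rw [this, hlaw Pr hn μ T hmeas hindep hexp (Equiv.refl (Fin n))]

end Prob

lemma exists_perm {n : ℕ} (D D' : Finset (Fin n)) (h : D.card = D'.card) :
    ∃ σ : Equiv.Perm (Fin n), ∀ i, σ i ∈ D' ↔ i ∈ D := by
  classical
  have e : {x // x ∈ D} ≃ {x // x ∈ D'} :=
    Fintype.equivOfCardEq (by rw [Fintype.card_coe, Fintype.card_coe, h])
  refine ⟨e.extendSubtype, fun i => ?_⟩
  by_cases hi : i ∈ D
  · simpa [hi] using e.extendSubtype_mem i hi
  · simpa [hi] using e.extendSubtype_not_mem i hi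

lemma structSig_succ (n : ℕ) (Φ : (Fin n → Bool) → Bool) (k : ℕ) :
    structSig n Φ (k + 1) = Sbar n Φ k - Sbar n Φ (k + 1) := by
  simp [structSig]

lemma Sbar_self {n : ℕ} {Φ : (Fin n → Bool) → Bool} (hΦ0 : Φ (fun _ => false) = false) :
    Sbar n Φ n = 0 := by
  have h : (Finset.univ.filter (fun x : Fin n → Bool =>
      (Finset.univ.filter (fun i => x i = false)).card = n ∧ Φ x = true)) = ∅ := by
    rw [Finset.filter_eq_empty_iff]
    rintro x - ⟨hcard, hΦ⟩
    have huniv : Finset.univ.filter (fun i => x i = false) = Finset.univ := by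
      apply Finset.eq_univ_of_card
      simp [hcard]
    have : x = (fun _ => false) := by
      funext i
      have := Finset.mem_filter.mp (huniv ▸ Finset.mem_univ i)
      exact this.2
    rw [this, hΦ0] at hΦ
    exact Bool.false_ne_true hΦ
  rw [Sbar, h]
  simp

lemma Sbar_zero {n : ℕ} {Φ : (Fin n → Bool) → Bool} (hΦ1 : Φ (fun _ => true) = true) :
    Sbar n Φ 0 = 1 := by
  have h : (Finset.univ.filter (fun x : Fin n → Bool =>
      (Finset.univ.filter (fun i => x i = false)).card = 0 ∧ Φ x = true)) = {fun _ => true} := by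
    ext x
    simp only [Finset.mem_filter, Finset.mem_univ, true_and, Finset.mem_singleton]
    constructor
    · rintro ⟨hz, -⟩
      funext i
      have hi : i ∉ Finset.univ.filter (fun i => x i = false) := by
        rw [Finset.card_eq_zero.mp hz]; exact Finset.notMem_empty i
      simp only [Finset.mem_filter, Finset.mem_univ, true_and] at hi
      cases hxi : x i
      · exact absurd hxi hi
      · rfl
    · rintro rfl
      refine ⟨?_, hΦ1⟩
      rw [Finset.card_eq_zero, Finset.filter_eq_empty_iff]
      intro i _
      simp
  rw [Sbar, h]
  simp

lemma tele (c : ℕ → ℝ) {j n : ℕ} (h : j ≤ n) :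
    ∑ m ∈ Finset.Ico j n, (c m - c (m+1)) = c j - c n := by
  rw [Finset.sum_Ico_eq_sub _ h, Finset.sum_range_sub' c, Finset.sum_range_sub' c]; ring

lemma algR {n : ℕ} (Φ : (Fin n → Bool) → Bool) (hΦ0 : Φ (fun _ => false) = false)
    (r : Finset (Fin n) → ℝ) :
    ∑ k : Fin n, structSig n Φ ((k:ℕ) + 1) *
        ∑ D ∈ Finset.univ.filter (fun D : Finset (Fin n) => D.card ≤ (k:ℕ)), r D
      = ∑ D : Finset (Fin n), Sbar n Φ D.card * r D := by
  have hstep : ∀ k : Fin n, structSig n Φ ((k:ℕ) + 1) *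
      ∑ D ∈ Finset.univ.filter (fun D : Finset (Fin n) => D.card ≤ (k:ℕ)), r D
      = ∑ D : Finset (Fin n),
          (if D.card ≤ (k:ℕ) then (Sbar n Φ (k:ℕ) - Sbar n Φ ((k:ℕ)+1)) * r D else 0) := by
    intro k
    rw [structSig_succ, Finset.mul_sum, Finset.sum_filter]
  simp_rw [hstep]
  rw [Finset.sum_comm]
  refine Finset.sum_congr rfl fun D _ => ?_
  have hcard : D.card ≤ n := le_trans (Finset.card_le_univ D) (by simp)
  have h1 : ∀ k : Fin n, (if D.card ≤ (k:ℕ) then (Sbar n Φ (k:ℕ) - Sbar n Φ ((k:ℕ)+1)) * r D else 0)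
      = (if D.card ≤ (k:ℕ) then (Sbar n Φ (k:ℕ) - Sbar n Φ ((k:ℕ)+1)) else 0) * r D := by
    intro k; split <;> simp
  simp_rw [h1]
  rw [← Finset.sum_mul]
  congr 1
  rw [Fin.sum_univ_eq_sum_range (fun m => if D.card ≤ m then (Sbar n Φ m - Sbar n Φ (m+1)) else 0) n,
    ← Finset.sum_filter]
  have h2 : (Finset.range n).filter (fun m => D.card ≤ m) = Finset.Ico D.card n := by
    ext m
    simp [Finset.mem_Ico, Finset.mem_range, and_comm]
  rw [h2, tele _ hcard, Sbar_self hΦ0, sub_zero]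

lemma card_good {n : ℕ} (Φ : (Fin n → Bool) → Bool) (j : ℕ) :
    (Finset.univ.filter (fun D : Finset (Fin n) =>
        D.card = j ∧ Φ (fun i => decide (i ∉ D)) = true)).card
      = (Finset.univ.filter (fun x : Fin n → Bool =>
          (Finset.univ.filter (fun i => x i = false)).card = j ∧ Φ x = true)).card := by
  apply Finset.card_bij (fun D _ => fun i => decide (i ∉ D))
  · intro D hD
    simp only [Finset.mem_filter, Finset.mem_univ, true_and] at hD ⊢
    have hset : Finset.univ.filter (fun i => (decide (i ∉ D) : Bool) = false) = D := by
      ext i; simp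
    rw [hset]
    exact hD
  · intro D hD D' hD' heq
    ext i
    exact (by simpa [decide_eq_decide] using congrFun heq i)
  · intro x hx
    simp only [Finset.mem_filter, Finset.mem_univ, true_and] at hx
    have hfun : (fun i => decide (i ∉ Finset.univ.filter (fun i => x i = false))) = x := by
      funext i
      cases hxi : x i <;> simp [hxi]
    exact ⟨Finset.univ.filter (fun i => x i = false), by simp [hfun, hx.1, hx.2], hfun⟩

lemma card_fiber {n : ℕ} (j : ℕ) :
    (Finset.univ.filter (fun D : Finset (Fin n) => D.card = j)).card = n.choose j := by
  rw [← Finset.powerset_univ, ← Finset.powersetCard_eq_filter, Finset.card_powersetCard,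
    Finset.card_fin]

lemma algL {n : ℕ} (Φ : (Fin n → Bool) → Bool)
    (r : Finset (Fin n) → ℝ) (hr : ∀ D D' : Finset (Fin n), D.card = D'.card → r D = r D') :
    ∑ D ∈ Finset.univ.filter (fun D : Finset (Fin n) => Φ (fun i => decide (i ∉ D)) = true), r D
      = ∑ D : Finset (Fin n), Sbar n Φ D.card * r D := by
  classical
  rw [Finset.sum_filter]
  have hmaps : ∀ D ∈ (Finset.univ : Finset (Finset (Fin n))), D.card ∈ Finset.range (n+1) :=
    fun D _ => Finset.mem_range.mpr (Nat.lt_succ_of_le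
      (le_trans (Finset.card_le_univ D) (by simp)))
  rw [← Finset.sum_fiberwise_of_maps_to hmaps
      (fun D => if Φ (fun i => decide (i ∉ D)) = true then r D else 0),
    ← Finset.sum_fiberwise_of_maps_to hmaps (fun D => Sbar n Φ D.card * r D)]
  refine Finset.sum_congr rfl fun j hj => ?_
  have hj' : j ≤ n := Nat.lt_succ_iff.mp (Finset.mem_range.mp hj)
  obtain ⟨D0, -, hD0⟩ := Finset.exists_subset_card_eq
    (s := (Finset.univ : Finset (Fin n))) (n := j) (by simpa using hj')
  have hrD0 : ∀ D ∈ Finset.univ.filter (fun D : Finset (Fin n) => D.card = j), r D = r D0 := by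
    intro D hD
    exact hr D D0 (((Finset.mem_filter.mp hD).2).trans hD0.symm)
  have hL : ∑ D ∈ Finset.univ.filter (fun D : Finset (Fin n) => D.card = j),
      (if Φ (fun i => decide (i ∉ D)) = true then r D else 0)
      = ((Finset.univ.filter (fun D : Finset (Fin n) =>
          D.card = j ∧ Φ (fun i => decide (i ∉ D)) = true)).card : ℝ) * r D0 := by
    rw [← Finset.sum_filter, Finset.filter_filter]
    rw [Finset.sum_congr rfl (fun D hD => hrD0 D
      (Finset.mem_filter.mpr ⟨Finset.mem_univ D, (Finset.mem_filter.mp hD).2.1⟩))]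
    rw [Finset.sum_const, nsmul_eq_mul]
  have hR : ∑ D ∈ Finset.univ.filter (fun D : Finset (Fin n) => D.card = j),
      Sbar n Φ D.card * r D = (n.choose j : ℝ) * (Sbar n Φ j * r D0) := by
    rw [Finset.sum_congr rfl (fun D hD => by
      rw [(Finset.mem_filter.mp hD).2, hrD0 D hD])]
    rw [Finset.sum_const, nsmul_eq_mul, card_fiber]
  rw [hL, hR, card_good, Sbar]
  have hchoose : (n.choose j : ℝ) ≠ 0 := Nat.cast_ne_zero.mpr (Nat.choose_pos hj').ne'
  field_simp

lemma master {Ω : Type*} [MeasurableSpace Ω] (Pr : Measure Ω) [IsProbabilityMeasure Pr]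
    (n : ℕ) (hn : 1 ≤ n) (Φ : (Fin n → Bool) → Bool)
    (hmono : ∀ x y : Fin n → Bool, (∀ i, x i ≤ y i) → Φ x ≤ Φ y)
    (hΦ0 : Φ (fun _ => false) = false) (hΦ1 : Φ (fun _ => true) = true)
    (μ : ℝ) (T : Fin n → Ω → ℝ)
    (hmeas : ∀ i, Measurable (T i))
    (hindep : iIndepFun T Pr)
    (hexp : ∀ (i : Fin n) (t : ℝ), 0 ≤ t →
      Pr {ω | t < T i ω} = ENNReal.ofReal (Real.exp (-μ * t)))
    (A : Set (Fin n → ℝ)) (hA : MeasurableSet A)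
    (hAsym : ∀ (σ : Equiv.Perm (Fin n)) (y : Fin n → ℝ), ((fun i => y (σ i)) ∈ A) ↔ y ∈ A)
    (t : ℝ) :
    (Pr ((fun ω (i : Fin n) => T i ω) ⁻¹' ({y | t < failTime n Φ y} ∩ A))).toReal =
      ∑ k : Fin n, structSig n Φ ((k : ℕ) + 1) *
        (Pr ((fun ω (i : Fin n) => T i ω) ⁻¹' ({y | t < orderStat n y k} ∩ A))).toReal := by
  classical
  have hvec : Measurable (fun ω (i : Fin n) => T i ω) := measurable_pi_lambda _ (fun i => hmeas i)
  set vec := fun ω (i : Fin n) => T i ω with hvecdef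
  set r : Finset (Fin n) → ℝ := fun D => (Pr (vec ⁻¹' (deadE n t D ∩ A))).toReal with hrdef
  have hsum : ∀ S : Finset (Finset (Fin n)),
      (Pr (vec ⁻¹' ({y | deadSet n t y ∈ S} ∩ A))).toReal = ∑ D ∈ S, r D := by
    intro S
    rw [← biUnion_deadE, Set.iUnion₂_inter, Set.preimage_iUnion₂]
    rw [measure_biUnion_finset ?disj ?meas]
    · exact ENNReal.toReal_sum (fun D _ => measure_ne_top _ _)
    case meas => exact fun D _ => hvec ((measurableSet_deadE t D).inter hA)
    case disj =>
      intro D _ D' _ hne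
      refine Set.disjoint_left.mpr ?_
      intro ω h1 h2
      simp only [Set.mem_preimage, Set.mem_inter_iff] at h1 h2
      exact hne ((mem_deadE_iff.mp h1.1).symm.trans (mem_deadE_iff.mp h2.1))
  have hr : ∀ D D' : Finset (Fin n), D.card = D'.card → r D = r D' := by
    intro D D' h
    obtain ⟨σ, hσ⟩ := exists_perm D D' h
    have hde : ∀ y : Fin n → ℝ, ((fun i => y (σ i)) ∈ deadE n t D) ↔ y ∈ deadE n t D' := by
      intro y
      simp only [deadE, Set.mem_setOf_eq]
      constructor
      · intro h2 j
        have h3 := h2 (σ.symm j)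
        rw [Equiv.apply_symm_apply] at h3
        have h4 := hσ (σ.symm j)
        rw [Equiv.apply_symm_apply] at h4
        rw [h3, ← h4]
      · intro h2 i
        rw [h2 (σ i), hσ i]
    have hset : (fun (y : Fin n → ℝ) i => y (σ i)) ⁻¹' (deadE n t D ∩ A) = deadE n t D' ∩ A := by
      ext y
      simp only [Set.mem_preimage, Set.mem_inter_iff]
      exact and_congr (hde y) (hAsym σ y)
    have hi := hinv Pr hn μ T hmeas hindep hexp σ (deadE n t D ∩ A)
      ((measurableSet_deadE t D).inter hA)
    rw [hset] at hi
    simp only [hrdef]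
    rw [hi]
  have hOk : ∀ k : Fin n, (Pr (vec ⁻¹' ({y | t < orderStat n y k} ∩ A))).toReal
      = ∑ D ∈ Finset.univ.filter (fun D : Finset (Fin n) => D.card ≤ (k : ℕ)), r D := by
    intro k
    have horder : {y : Fin n → ℝ | t < orderStat n y k} ∩ A
        = {y : Fin n → ℝ | deadSet n t y ∈ Finset.univ.filter
            (fun D : Finset (Fin n) => D.card ≤ (k : ℕ))} ∩ A := by
      congr 1
      ext y
      simp only [Set.mem_setOf_eq, Finset.mem_filter, Finset.mem_univ, true_and]
      exact ord_iff y t k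
    rw [horder, hsum]
  simp_rw [hOk]
  rw [algR Φ hΦ0 r]
  rcases le_or_gt 0 t with ht | ht
  · have hfail : {y : Fin n → ℝ | t < failTime n Φ y}
        = {y : Fin n → ℝ | deadSet n t y ∈ Finset.univ.filter
            (fun D : Finset (Fin n) => Φ (fun i => decide (i ∉ D)) = true)} := by
      ext y
      simp only [Set.mem_setOf_eq, Finset.mem_filter, Finset.mem_univ, true_and]
      rw [lt_failTime_iff hn hmono hΦ0 ht y]
      have hst : (fun i => decide (t < y i)) = (fun i => decide (i ∉ deadSet n t y)) := by
        funext i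
        apply decide_eq_decide.mpr
        simp [deadSet, not_le]
      rw [hst]
    rw [hfail, hsum, algL Φ r hr]
  · have hfail : {y : Fin n → ℝ | t < failTime n Φ y}
        = {y : Fin n → ℝ | deadSet n t y ∈ (Finset.univ : Finset (Finset (Fin n)))} := by
      ext y
      simp only [Set.mem_setOf_eq, Finset.mem_univ, iff_true]
      exact lt_of_lt_of_le ht (failTime_nonneg n Φ y)
    rw [hfail, hsum]
    have hzero : ∀ D : Finset (Fin n), D ≠ ∅ → r D = 0 := by
      intro D hD
      obtain ⟨i, hi⟩ := Finset.nonempty_iff_ne_empty.mpr hD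
      have hsub : vec ⁻¹' (deadE n t D ∩ A) ⊆ {ω | T i ω ≤ t} := by
        intro ω hω
        simp only [Set.mem_preimage, Set.mem_inter_iff] at hω
        exact (hω.1 i).mpr hi
      have h0 : Pr {ω | T i ω ≤ t} = 0 := by
        have hsub2 : {ω | T i ω ≤ t} ⊆ (T i ⁻¹' Set.Ioi (0 : ℝ))ᶜ := by
          intro ω hω
          simp only [Set.mem_compl_iff, Set.mem_preimage, Set.mem_Ioi, not_lt]
          exact le_trans hω ht.le
        refine measure_mono_null hsub2 ?_
        rw [measure_compl (hmeas i measurableSet_Ioi) (measure_ne_top _ _)]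
        have h1 : Pr (T i ⁻¹' Set.Ioi (0 : ℝ)) = 1 := by
          rw [show T i ⁻¹' Set.Ioi (0 : ℝ) = {ω | (0 : ℝ) < T i ω} from rfl,
            hexp i 0 le_rfl]
          simp
        rw [h1]
        simp
      simp only [hrdef]
      rw [measure_mono_null hsub h0]
      simp
    refine Finset.sum_congr rfl fun D _ => ?_
    by_cases hD : D = ∅
    · subst hD
      rw [Finset.card_empty, Sbar_zero hΦ1, one_mul]
    · rw [hzero D hD, mul_zero]

/-- Samaniego decomposition for semi-coherent systems with i.i.d. exponential
component lifetimes, jointly with the order statistics: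
`P(T_fail > t, T_{1:n} > t_1, …, T_{n:n} > t_n)
  = Σ_k s_k P(T_{k:n} > t, T_{1:n} > t_1, …, T_{n:n} > t_n)`;
in particular `P(T_fail > t) = Σ_k s_k P(T_{k:n} > t)`. -/
theorem stmt12 {Ω : Type*} [MeasurableSpace Ω] (Pr : Measure Ω) [IsProbabilityMeasure Pr]
    (n : ℕ) (hn : 1 ≤ n) (Φ : (Fin n → Bool) → Bool)
    (hmono : ∀ x y : Fin n → Bool, (∀ i, x i ≤ y i) → Φ x ≤ Φ y)
    (hΦ0 : Φ (fun _ => false) = false) (hΦ1 : Φ (fun _ => true) = true)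
    (μ : ℝ) (hμ : 0 < μ)
    (T : Fin n → Ω → ℝ)
    (hmeas : ∀ i, Measurable (T i))
    (hindep : iIndepFun T Pr)
    (hexp : ∀ (i : Fin n) (t : ℝ), 0 ≤ t →
      Pr {ω | t < T i ω} = ENNReal.ofReal (Real.exp (-μ * t))) :
    (∀ (t : ℝ) (tv : Fin n → ℝ),
      (Pr {ω | t < failTime n Φ (fun i => T i ω) ∧
          ∀ j : Fin n, tv j < orderStat n (fun i => T i ω) j}).toReal =
        ∑ k : Fin n, structSig n Φ ((k : ℕ) + 1) *
          (Pr {ω | t < orderStat n (fun i => T i ω) k ∧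
            ∀ j : Fin n, tv j < orderStat n (fun i => T i ω) j}).toReal) ∧
    (∀ t : ℝ,
      (Pr {ω | t < failTime n Φ (fun i => T i ω)}).toReal =
        ∑ k : Fin n, structSig n Φ ((k : ℕ) + 1) *
          (Pr {ω | t < orderStat n (fun i => T i ω) k}).toReal) := by
  classical
  constructor
  · intro t tv
    set A : Set (Fin n → ℝ) := {y | ∀ j : Fin n, tv j < orderStat n y j} with hAdef
    have hAeq : A = ⋂ j : Fin n, {y : Fin n → ℝ | deadSet n (tv j) y ∈
        Finset.univ.filter (fun D : Finset (Fin n) => D.card ≤ (j : ℕ))} := by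
      ext y
      simp only [hAdef, Set.mem_iInter, Set.mem_setOf_eq, Finset.mem_filter, Finset.mem_univ,
        true_and]
      exact forall_congr' fun j => ord_iff y (tv j) j
    have hA : MeasurableSet A := by
      rw [hAeq]
      refine MeasurableSet.iInter fun j => ?_
      rw [← biUnion_deadE]
      exact Finset.measurableSet_biUnion _ fun D _ => measurableSet_deadE _ D
    have hcnt : ∀ (σ : Equiv.Perm (Fin n)) (s : ℝ) (y : Fin n → ℝ),
        deadSet n s (fun i => y (σ i)) = (deadSet n s y).image σ.symm := by
      intro σ s y
      ext i
      simp only [deadSet, Finset.mem_filter, Finset.mem_univ, true_and, Finset.mem_image]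
      constructor
      · intro h
        exact ⟨σ i, by simpa using h, σ.symm_apply_apply i⟩
      · rintro ⟨j, hj, rfl⟩
        simpa using hj
    have hAsym : ∀ (σ : Equiv.Perm (Fin n)) (y : Fin n → ℝ),
        ((fun i => y (σ i)) ∈ A) ↔ y ∈ A := by
      intro σ y
      simp only [hAdef, Set.mem_setOf_eq]
      refine forall_congr' fun j => ?_
      rw [ord_iff _ (tv j) j, ord_iff y (tv j) j, hcnt σ (tv j) y,
        Finset.card_image_of_injective _ σ.symm.injective]
    have hev1 : {ω | t < failTime n Φ (fun i => T i ω) ∧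
        ∀ j : Fin n, tv j < orderStat n (fun i => T i ω) j}
        = (fun ω (i : Fin n) => T i ω) ⁻¹' ({y | t < failTime n Φ y} ∩ A) := rfl
    have hev2 : ∀ k : Fin n, {ω | t < orderStat n (fun i => T i ω) k ∧
        ∀ j : Fin n, tv j < orderStat n (fun i => T i ω) j}
        = (fun ω (i : Fin n) => T i ω) ⁻¹' ({y | t < orderStat n y k} ∩ A) := fun k => rfl
    rw [hev1]
    simp_rw [hev2]
    exact master Pr n hn Φ hmono hΦ0 hΦ1 μ T hmeas hindep hexp A hA hAsym t
  · intro t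
    have hev1 : {ω | t < failTime n Φ (fun i => T i ω)}
        = (fun ω (i : Fin n) => T i ω) ⁻¹' ({y | t < failTime n Φ y} ∩ Set.univ) := by
      rw [Set.inter_univ]; rfl
    have hev2 : ∀ k : Fin n, {ω | t < orderStat n (fun i => T i ω) k}
        = (fun ω (i : Fin n) => T i ω) ⁻¹' ({y | t < orderStat n y k} ∩ Set.univ) := by
      intro k; rw [Set.inter_univ]; rfl
    rw [hev1]
    simp_rw [hev2]
    exact master Pr n hn Φ hmono hΦ0 hΦ1 μ T hmeas hindep hexp Set.univ MeasurableSet.univ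
      (fun _ _ => Iff.rfl) t
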